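/- arXiv:2407.04956 — 5 statements merged into one kernel-verified Lean document; each statement's English description precedes it below -/
import Mathlib

section
/- Let ℓ be an element of the extended tensor algebra over ℝ^d whose scalar component satisfies |ℓ^∅| < 1. Then the resolvent Σ_{n=0}^∞ ℓ^{⊗n} is well-defined, in the sense that for every word v, the series of the v-coefficients Σ_{n=0}^∞ ⟨ℓ^{⊗n}, v⟩ converges absolutely. -/
open scoped BigOperators

/-- Words over the alphabet `Fin d`. -/
abbrev Word (d : ℕ) := List (Fin d)

/-- The extended tensor algebra over `ℝ^d`, viewed as coefficient functions on words. -/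
abbrev ETA (d : ℕ) := Word d → ℝ

namespace ETA

variable {d : ℕ}

/-- The unit (empty word) element `∅`. -/
noncomputable def unit (d : ℕ) : ETA d := fun v => if v = [] then 1 else 0

/-- Concatenation (tensor) product. -/
noncomputable def concat (p q : ETA d) : ETA d :=
  fun v => ∑ k ∈ Finset.range (v.length + 1), p (v.take k) * q (v.drop k)

/-- Concatenation powers. -/
noncomputable def cpow (p : ETA d) : ℕ → ETA d
  | 0 => unit d
  | n + 1 => concat (cpow p n) p

/-- Shuffle product of two words as a multiset of words. -/
def shuffleW {A : Type*} : List A → List A → Multiset (List A)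
  | [], w => {w}
  | u, [] => {u}
  | a :: u, b :: w =>
      (shuffleW u (b :: w)).map (a :: ·) + (shuffleW (a :: u) w).map (b :: ·)
  termination_by u w => u.length + w.length
  decreasing_by all_goals (simp only [List.length_cons]; omega)

/-- The finset of all words of length `n` over `Fin d`. -/
noncomputable def wordsLen (d n : ℕ) : Finset (Word d) :=
  Finset.image (fun f : Fin n → Fin d => List.ofFn f) Finset.univ

/-- Shuffle product on the extended tensor algebra (coefficient-wise finite sums). -/
noncomputable def shuffle (p q : ETA d) : ETA d :=
  fun v => ∑ k ∈ Finset.range (v.length + 1),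
    ∑ u ∈ wordsLen d k, ∑ w ∈ wordsLen d (v.length - k),
      p u * q w * ((shuffleW u w).count v : ℝ)

/-- Shuffle powers. -/
noncomputable def spow (p : ETA d) : ℕ → ETA d
  | 0 => unit d
  | n + 1 => shuffle (spow p n) p

/-- A linear combination of single letters `Σ_i c i • e_i`. -/
def letters (c : Fin d → ℝ) : ETA d := fun v =>
  match v with
  | [i] => c i
  | _ => 0

/-- A single letter `e_i`. -/
noncomputable def letter (i : Fin d) : ETA d := fun v => if v = [i] then 1 else 0

/-- The resolvent `(∅ - q)⁻¹ = Σ_n q^{⊗n}`, defined coefficient-wise. -/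
noncomputable def res (q : ETA d) : ETA d := fun v => ∑' n, cpow q n v

/-- The shuffle exponential `exp^⧢(b) = Σ_n b^{⧢n}/n!`, defined coefficient-wise. -/
noncomputable def shuexp (b : ETA d) : ETA d := fun v => ∑' n, spow b n v / (Nat.factorial n : ℝ)

/-- Right projection `ℓ|_i`, removing a terminal letter `i`. -/
def proj (p : ETA d) (i : Fin d) : ETA d := fun v => p (v ++ [i])

end ETA

lemma cpow_nil (d : ℕ) (ℓ : ETA d) : ∀ n, ETA.cpow ℓ n [] = (ℓ []) ^ n := by
  intro n
  induction n with
  | zero => simp [ETA.cpow, ETA.unit]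
  | succ n ih => simp [ETA.cpow, ETA.concat, ih, pow_succ]

/-- If `f (n+1) ≤ a f n + h n` with `0 ≤ a < 1` and `h` summable nonneg, then `f` is summable. -/
lemma summable_of_rec (a : ℝ) (ha0 : 0 ≤ a) (ha : a < 1) (f h : ℕ → ℝ)
    (hf0 : ∀ n, 0 ≤ f n) (hh0 : ∀ n, 0 ≤ h n) (hh : Summable h)
    (hrec : ∀ n, f (n + 1) ≤ a * f n + h n) : Summable f := by
  set H : ℕ → ℝ := fun n => ∑ k ∈ Finset.range (n + 1), h k * a ^ (n - k) with hHdef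
  have hH0 : ∀ n, 0 ≤ H n := fun n =>
    Finset.sum_nonneg fun k _ => mul_nonneg (hh0 k) (pow_nonneg ha0 _)
  have hHsum : Summable H := by
    have hgeo : Summable fun k : ℕ => ‖a ^ k‖ := by
      simpa [Real.norm_eq_abs, abs_pow, abs_of_nonneg ha0] using
        summable_geometric_of_lt_one ha0 ha
    have hhn : Summable fun k => ‖h k‖ := by
      simpa [Real.norm_eq_abs, abs_of_nonneg (hh0 _)] using hh
    have := summable_norm_sum_mul_range_of_summable_norm hhn hgeo
    refine this.congr fun n => ?_
    rw [Real.norm_eq_abs, abs_of_nonneg]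
    exact Finset.sum_nonneg fun k _ => mul_nonneg (hh0 k) (pow_nonneg ha0 _)
  have hHrec : ∀ n, H (n + 1) = a * H n + h (n + 1) := by
    intro n
    rw [hHdef]
    simp only
    rw [Finset.sum_range_succ]
    have : ∀ k ∈ Finset.range (n + 1), h k * a ^ (n + 1 - k) = a * (h k * a ^ (n - k)) := by
      intro k hk
      have hk' : k ≤ n := Nat.lt_succ_iff.mp (Finset.mem_range.mp hk)
      have : n + 1 - k = (n - k) + 1 := by omega
      rw [this, pow_succ]; ring
    rw [Finset.sum_congr rfl this, ← Finset.mul_sum]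
    simp
  have hbound : ∀ n, f (n + 1) ≤ a ^ (n + 1) * f 0 + H n := by
    intro n
    induction n with
    | zero =>
      have := hrec 0
      simpa [hHdef, pow_one] using this
    | succ n ih =>
      calc f (n + 2) ≤ a * f (n + 1) + h (n + 1) := hrec (n + 1)
        _ ≤ a * (a ^ (n + 1) * f 0 + H n) + h (n + 1) := by
            have := mul_le_mul_of_nonneg_left ih ha0
            linarith
        _ = a ^ (n + 2) * f 0 + (a * H n + h (n + 1)) := by ring
        _ = a ^ (n + 2) * f 0 + H (n + 1) := by rw [hHrec n]
  have hs : Summable fun n => a ^ (n + 1) * f 0 + H n := by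
    refine Summable.add ?_ hHsum
    have : Summable fun n : ℕ => a ^ n := summable_geometric_of_lt_one ha0 ha
    have := (this.mul_right (a * f 0))
    refine this.congr fun n => ?_
    rw [pow_succ]; ring
  have : Summable fun n => f (n + 1) := by
    refine Summable.of_nonneg_of_le (fun n => hf0 _) (fun n => hbound n) hs
  exact (summable_nat_add_iff 1).mp this

/-- If `|ℓ^∅| < 1` then the resolvent `Σ_n ℓ^{⊗n}` is well defined:
for every word `v` the series of `v`-coefficients converges absolutely. -/
theorem resolvent_well_defined (d : ℕ) (ℓ : ETA d) (h : |ℓ []| < 1) (v : Word d) :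
    Summable (fun n : ℕ => |ETA.cpow ℓ n v|) := by
  have ha0 : (0:ℝ) ≤ |ℓ []| := abs_nonneg _
  suffices H : ∀ m : ℕ, ∀ v : Word d, v.length ≤ m →
      Summable (fun n : ℕ => |ETA.cpow ℓ n v|) from H v.length v le_rfl
  intro m
  induction m with
  | zero =>
    intro v hv
    have hv0 : v = [] := List.length_eq_zero_iff.mp (Nat.le_zero.mp hv)
    subst hv0
    refine (summable_geometric_of_lt_one ha0 h).congr fun n => ?_
    rw [cpow_nil, abs_pow]
  | succ m ih =>
    intro v hv
    rcases Nat.lt_or_ge v.length (m + 1) with hl | hl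
    · exact ih v (Nat.lt_succ_iff.mp hl)
    have hlen : v.length = m + 1 := le_antisymm hv hl
    refine summable_of_rec (|ℓ []|) ha0 h _
      (fun n => ∑ k ∈ Finset.range v.length, |ETA.cpow ℓ n (v.take k)| * |ℓ (v.drop k)|)
      (fun n => abs_nonneg _)
      (fun n => Finset.sum_nonneg fun k _ => mul_nonneg (abs_nonneg _) (abs_nonneg _))
      ?_ ?_
    · refine summable_sum fun k hk => ?_
      have hk' : k < v.length := Finset.mem_range.mp hk
      have hlen' : (v.take k).length ≤ m := by
        rw [List.length_take]; omega
      exact (ih _ hlen').mul_right _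
    · intro n
      have hexp : ETA.cpow ℓ (n + 1) v =
          (∑ k ∈ Finset.range v.length, ETA.cpow ℓ n (v.take k) * ℓ (v.drop k))
            + ETA.cpow ℓ n v * ℓ [] := by
        show ETA.concat (ETA.cpow ℓ n) ℓ v = _
        rw [ETA.concat, Finset.sum_range_succ, List.take_length, List.drop_length]
      calc |ETA.cpow ℓ (n + 1) v|
          ≤ |∑ k ∈ Finset.range v.length, ETA.cpow ℓ n (v.take k) * ℓ (v.drop k)|
              + |ETA.cpow ℓ n v * ℓ []| := by rw [hexp]; exact abs_add_le _ _
        _ ≤ (∑ k ∈ Finset.range v.length, |ETA.cpow ℓ n (v.take k)| * |ℓ (v.drop k)|)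
              + |ℓ []| * |ETA.cpow ℓ n v| := by
            gcongr
            · refine (Finset.abs_sum_le_sum_abs _ _).trans ?_
              refine le_of_eq (Finset.sum_congr rfl fun k _ => abs_mul _ _)
            · rw [abs_mul, mul_comm]
        _ = |ℓ []| * |ETA.cpow ℓ n v|
              + ∑ k ∈ Finset.range v.length, |ETA.cpow ℓ n (v.take k)| * |ℓ (v.drop k)| := by
            ring
end

section
/- Let a and b be linear combinations of single letters in the tensor algebra over ℝ^d. Then the resolvent of a⊗exp^{⧢}(b) satisfies (∅ - a⊗exp^{⧢}(b))^{-1} = (∅ - b) ⊗ exp^{⧢}(a+b), and the resolvent of exp^{⧢}(b)⊗a satisfies (∅ - exp^{⧢}(b)⊗a)^{-1} = exp^{⧢}(a+b) ⊗ (∅ - b). -/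
open scoped BigOperators

namespace ETA

variable {d : ℕ}

-- basics
lemma mem_wordsLen {n : ℕ} {u : Word d} : u ∈ wordsLen d n ↔ u.length = n := by
  constructor
  · intro h
    simp only [wordsLen, Finset.mem_image] at h
    obtain ⟨f, _, rfl⟩ := h
    simp
  · intro h
    subst h
    simp only [wordsLen, Finset.mem_image]
    exact ⟨fun i => u.get i, Finset.mem_univ _, List.ofFn_get u⟩

lemma letters_nil (c : Fin d → ℝ) : letters c ([] : Word d) = 0 := rfl

lemma letters_single (c : Fin d → ℝ) (i : Fin d) : letters c [i] = c i := rfl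

lemma letters_eq_zero (c : Fin d → ℝ) {v : Word d} (h : v.length ≠ 1) : letters c v = 0 := by
  match v with
  | [] => rfl
  | [x] => simp at h
  | x :: y :: t => rfl

lemma shuffleW_nil_left {A : Type*} (w : List A) : shuffleW ([] : List A) w = {w} := by
  rw [shuffleW]

lemma shuffleW_cons_nil {A : Type*} (a : A) (u : List A) :
    shuffleW (a :: u) ([] : List A) = {a :: u} := by
  rw [shuffleW]
  simp

lemma shuffleW_cons_cons {A : Type*} (a b : A) (u w : List A) :
    shuffleW (a :: u) (b :: w)
      = (shuffleW u (b :: w)).map (a :: ·) + (shuffleW (a :: u) w).map (b :: ·) := by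
  rw [shuffleW]

lemma multiset_range_succ' (n : ℕ) :
    Multiset.range (n + 1) = 0 ::ₘ (Multiset.range n).map Nat.succ := by
  have := List.range_succ_eq_map (n := n)
  simp only [Multiset.range, this]
  rfl

lemma shuffleW_single_right {A : Type*} (u : List A) (i : A) :
    shuffleW u [i] = (Multiset.range (u.length + 1)).map (fun j => u.insertIdx j i) := by
  induction u with
  | nil => simp [shuffleW_nil_left]
  | cons a u ih =>
    rw [shuffleW_cons_cons, ih, shuffleW_cons_nil, Multiset.map_map]
    conv_rhs => rw [List.length_cons, multiset_range_succ', Multiset.map_cons, Multiset.map_map]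
    rw [add_comm]
    simp [Function.comp_def, Multiset.singleton_add]
    rw [Multiset.cons_swap]

lemma count_map_range {A : Type*} [DecidableEq A] (n : ℕ) (f : ℕ → A) (x : A) :
    ((Multiset.range n).map f).count x = ∑ j ∈ Finset.range n, if f j = x then 1 else 0 := by
  induction n with
  | zero => simp
  | succ n ih =>
    rw [Multiset.range_succ, Multiset.map_cons, Multiset.count_cons, Finset.sum_range_succ, ih]
    congr 1
    simp [eq_comm]

lemma insertIdx_getElem_eraseIdx {A : Type*} :
    ∀ (l : List A) (j : ℕ) (h : j < l.length), (l.eraseIdx j).insertIdx j (l.get ⟨j, h⟩) = l := by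
  intro l
  induction l with
  | nil => intro j h; simp at h
  | cons x t ih =>
    intro j h
    match j with
    | 0 => rfl
    | j + 1 =>
      simp only [List.eraseIdx_cons_succ, List.insertIdx_succ_cons]
      rw [show (x :: t).get ⟨j+1, h⟩ = t.get ⟨j, by simpa using h⟩ from rfl]
      rw [ih]

lemma sum_wordsLen_one (f : Word d → ℝ) : ∑ w ∈ wordsLen d 1, f w = ∑ i : Fin d, f [i] := by
  rw [wordsLen, Finset.sum_image (fun g _ h _ hgh => List.ofFn_injective hgh)]
  refine Fintype.sum_equiv (Equiv.funUnique (Fin 1) (Fin d)) _ _ (fun g => ?_)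
  simp [List.ofFn_succ]

lemma shuffle_letters (p : ETA d) (c : Fin d → ℝ) (v : Word d) :
    shuffle p (letters c) v = ∑ j : Fin v.length, p (v.eraseIdx j) * c (v.get j) := by
  have hzero : ∀ k ∈ Finset.range (v.length + 1), k + 1 ≠ v.length →
      (∑ u ∈ wordsLen d k, ∑ w ∈ wordsLen d (v.length - k),
        p u * letters c w * ((shuffleW u w).count v : ℝ)) = 0 := by
    intro k hk hne
    refine Finset.sum_eq_zero fun u hu => Finset.sum_eq_zero fun w hw => ?_
    rw [letters_eq_zero c ?_]
    · ring
    · rw [mem_wordsLen.mp hw]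
      simp only [Finset.mem_range] at hk
      omega
  match v with
  | [] =>
    simp only [shuffle]
    rw [Finset.sum_eq_zero fun k hk => hzero k hk (by simp)]
    simp
  | x :: t =>
    have hlen : (x :: t : Word d).length = t.length + 1 := rfl
    simp only [shuffle]
    rw [Finset.sum_eq_single t.length]
    rotate_left
    · intro b hb hbne
      exact hzero b hb (by simp only [hlen]; omega)
    · intro h
      exact absurd (Finset.mem_range.mpr (by rw [hlen]; omega)) h
    have h1 : (x :: t : Word d).length - t.length = 1 := by simp [hlen]
    rw [h1]
    simp only [sum_wordsLen_one, letters_single]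
    have hcount : ∀ u ∈ wordsLen d t.length, ∀ i : Fin d,
        ((shuffleW u [i]).count (x :: t) : ℝ)
          = ∑ j ∈ Finset.range (t.length + 1),
              if u.insertIdx j i = x :: t then (1:ℝ) else 0 := by
      intro u hu i
      rw [shuffleW_single_right, count_map_range, mem_wordsLen.mp hu]
      push_cast
      simp
    have hjval : ∀ j : ℕ, ∀ hj : j < (x :: t : Word d).length,
        (∑ u ∈ wordsLen d t.length, ∑ i : Fin d,
            p u * c i * (if u.insertIdx j i = x :: t then (1:ℝ) else 0))
          = p ((x :: t : Word d).eraseIdx j) * c ((x :: t : Word d).get ⟨j, hj⟩) := by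
      intro j hj
      have hiff : ∀ u ∈ wordsLen d t.length, ∀ i : Fin d,
          (u.insertIdx j i = x :: t)
            ↔ (u = (x :: t : Word d).eraseIdx j ∧ i = (x :: t : Word d).get ⟨j, hj⟩) := by
        intro u hu i
        have hul : u.length = t.length := mem_wordsLen.mp hu
        have hjle : j ≤ u.length := by
          rw [hul]
          have := hj; rw [hlen] at this; omega
        constructor
        · intro h
          have hlen2 : j < (u.insertIdx j i).length := by
            rw [List.length_insertIdx_of_le_length hjle]; omega
          have h3 : (u.insertIdx j i)[j]? = (x :: t)[j]? := by rw [h]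
          rw [List.getElem?_eq_getElem hlen2, List.getElem?_eq_getElem hj] at h3
          have h4 := Option.some.inj h3
          rw [List.getElem_insertIdx_self] at h4
          refine ⟨by rw [← h, List.eraseIdx_insertIdx_self], ?_⟩
          simp only [List.get_eq_getElem]
          exact h4
        · rintro ⟨rfl, rfl⟩
          exact insertIdx_getElem_eraseIdx (x :: t) j hj
      have hinner : ∀ u ∈ wordsLen d t.length,
          (∑ i : Fin d, p u * c i * (if u.insertIdx j i = x :: t then (1:ℝ) else 0))
            = if u = (x :: t : Word d).eraseIdx j
                then p u * c ((x :: t : Word d).get ⟨j, hj⟩) else 0 := by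
        intro u hu
        by_cases hue : u = (x :: t : Word d).eraseIdx j
        · rw [if_pos hue, Finset.sum_eq_single ((x :: t : Word d).get ⟨j, hj⟩)]
          · rw [if_pos ((hiff u hu _).mpr ⟨hue, rfl⟩), mul_one]
          · intro i _ hne
            rw [if_neg fun hc => hne ((hiff u hu i).mp hc).2, mul_zero]
          · intro h; exact absurd (Finset.mem_univ _) h
        · rw [if_neg hue]
          refine Finset.sum_eq_zero fun i _ => ?_
          rw [if_neg fun hc => hue ((hiff u hu i).mp hc).1, mul_zero]
      rw [Finset.sum_congr rfl hinner, Finset.sum_ite_eq' (wordsLen d t.length)]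
      rw [if_pos (mem_wordsLen.mpr (by rw [List.length_eraseIdx_of_lt hj]; rfl))]
    calc ∑ u ∈ wordsLen d t.length, ∑ i : Fin d,
            p u * c i * ((shuffleW u [i]).count (x :: t) : ℝ)
        = ∑ u ∈ wordsLen d t.length, ∑ i : Fin d, ∑ j ∈ Finset.range (t.length + 1),
            p u * c i * (if u.insertIdx j i = x :: t then (1:ℝ) else 0) := by
          refine Finset.sum_congr rfl fun u hu => Finset.sum_congr rfl fun i _ => ?_
          rw [hcount u hu i, Finset.mul_sum]
      _ = ∑ j ∈ Finset.range (t.length + 1), ∑ u ∈ wordsLen d t.length, ∑ i : Fin d,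
            p u * c i * (if u.insertIdx j i = x :: t then (1:ℝ) else 0) := by
          rw [Finset.sum_congr rfl fun u _ => Finset.sum_comm, Finset.sum_comm]
      _ = ∑ j ∈ Finset.range ((x :: t : Word d).length),
            (if h : j < (x :: t : Word d).length
              then p ((x :: t : Word d).eraseIdx j) * c ((x :: t : Word d).get ⟨j, h⟩) else 0) := by
          refine Finset.sum_congr (by rw [hlen]) fun j hj => ?_
          have hj' : j < (x :: t : Word d).length := by
            rw [hlen]; exact Finset.mem_range.mp (by rwa [hlen] at hj)
          rw [dif_pos hj']
          exact hjval j hj'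
      _ = ∑ j : Fin (x :: t : Word d).length,
            p ((x :: t : Word d).eraseIdx j) * c ((x :: t : Word d).get j) := by
          rw [← Fin.sum_univ_eq_sum_range
            (fun j => if h : j < (x :: t : Word d).length
              then p ((x :: t : Word d).eraseIdx j) * c ((x :: t : Word d).get ⟨j, h⟩) else 0)]
          refine Finset.sum_congr rfl fun j _ => ?_
          rw [dif_pos j.isLt]

lemma map_prod_eraseIdx (c : Fin d → ℝ) :
    ∀ (v : Word d) (j : ℕ) (h : j < v.length),
      (((v.eraseIdx j).map c).prod) * c (v.get ⟨j, h⟩) = ((v.map c).prod) := by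
  intro v
  induction v with
  | nil => intro j h; simp at h
  | cons x t ih =>
    intro j h
    match j with
    | 0 => simp [mul_comm]
    | j + 1 =>
      have hj : j < t.length := by simpa using h
      simp only [List.eraseIdx_cons_succ, List.map_cons, List.prod_cons]
      rw [mul_assoc]
      rw [show (x :: t).get ⟨j + 1, h⟩ = t.get ⟨j, hj⟩ from rfl, ih j hj]

lemma spow_letters (c : Fin d → ℝ) :
    ∀ (n : ℕ) (v : Word d),
      spow (letters c) n v
        = if v.length = n then (n.factorial : ℝ) * ((v.map c).prod) else 0 := by
  intro n
  induction n with
  | zero =>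
    intro v
    match v with
    | [] => simp [spow, unit]
    | x :: t => simp [spow, unit]
  | succ n ih =>
    intro v
    rw [show spow (letters c) (n + 1) = shuffle (spow (letters c) n) (letters c) from rfl]
    rw [shuffle_letters]
    by_cases hv : v.length = n + 1
    · rw [if_pos hv]
      have hterm : ∀ j : Fin v.length,
          spow (letters c) n (v.eraseIdx j) * c (v.get j)
            = (n.factorial : ℝ) * ((v.map c).prod) := by
        intro j
        rw [ih]
        rw [if_pos (by rw [List.length_eraseIdx_of_lt j.isLt, hv]; rfl)]
        rw [mul_assoc, map_prod_eraseIdx c v j j.isLt]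
      rw [Finset.sum_congr rfl fun j _ => hterm j]
      rw [Finset.sum_const, Finset.card_univ, Fintype.card_fin]
      rw [nsmul_eq_mul, hv, ← mul_assoc]
      congr 1
      rw [Nat.factorial_succ]
      push_cast
      ring
    · rw [if_neg hv]
      refine Finset.sum_eq_zero fun j _ => ?_
      rw [ih]
      rw [if_neg, zero_mul]
      rw [List.length_eraseIdx_of_lt j.isLt]
      have : 0 < v.length := Nat.pos_of_ne_zero (by
        intro h0
        exact absurd (Fin.cast h0 j).isLt (by simp))
      omega

lemma shuexp_letters (c : Fin d → ℝ) :
    shuexp (letters c) = fun v => ((v.map c).prod) := by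
  funext v
  rw [shuexp]
  rw [tsum_eq_single v.length (fun n hn => by
    rw [spow_letters, if_neg (fun h => hn h.symm), zero_div])]
  rw [spow_letters, if_pos rfl, mul_div_assoc, mul_comm, div_mul_cancel₀]
  exact_mod_cast Nat.factorial_ne_zero v.length

lemma letters_add (a b : Fin d → ℝ) :
    letters a + letters b = letters (fun i => a i + b i) := by
  funext v
  match v with
  | [] => simp [letters]
  | [x] => simp [letters]
  | x :: y :: t => simp [letters]

lemma cpow_eq_zero {q : ETA d} (hq : q [] = 0) :
    ∀ (n : ℕ) (v : Word d), v.length < n → cpow q n v = 0 := by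
  intro n
  induction n with
  | zero => intro v h; omega
  | succ n ih =>
    intro v h
    rw [show cpow q (n + 1) = concat (cpow q n) q from rfl, concat]
    refine Finset.sum_eq_zero fun k hk => ?_
    rcases eq_or_lt_of_le (Nat.lt_succ_iff.mp (Finset.mem_range.mp hk)) with hke | hkl
    · rw [hke, List.drop_length, hq, mul_zero]
    · rw [ih (v.take k) (by rw [List.length_take]; omega), zero_mul]

lemma res_eq_sum {q : ETA d} (hq : q [] = 0) (v : Word d) :
    res q v = ∑ n ∈ Finset.range (v.length + 1), cpow q n v := by
  rw [res]
  exact tsum_eq_sum fun n hn =>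
    cpow_eq_zero hq n v (by have := Finset.mem_range.not.mp hn; omega)

lemma res_fixed {q : ETA d} (hq : q [] = 0) (v : Word d) :
    res q v = unit d v + ∑ k ∈ Finset.range v.length, res q (v.take k) * q (v.drop k) := by
  rw [res_eq_sum hq, Finset.sum_range_succ']
  rw [show cpow q 0 v = unit d v from rfl, add_comm]
  congr 1
  have hstep : ∀ i, cpow q (i + 1) v
      = ∑ k ∈ Finset.range (v.length + 1), cpow q i (v.take k) * q (v.drop k) := fun i => rfl
  rw [Finset.sum_congr rfl fun i _ => hstep i, Finset.sum_comm, Finset.sum_range_succ]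
  rw [List.drop_length, hq]
  simp only [mul_zero, Finset.sum_const_zero, add_zero]
  refine Finset.sum_congr rfl fun k hk => ?_
  have hk' : k < v.length := Finset.mem_range.mp hk
  rw [← Finset.sum_mul]
  congr 1
  rw [res_eq_sum hq, List.length_take, min_eq_left hk'.le]
  refine (Finset.sum_subset (Finset.range_subset_range.mpr (by omega)) ?_).symm
  intro n _ hn2
  refine cpow_eq_zero hq n (v.take k) ?_
  rw [List.length_take, min_eq_left hk'.le]
  have := Finset.mem_range.not.mp hn2
  omega

lemma res_eq {q R : ETA d} (hq : q [] = 0) (h0 : R [] = 1)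
    (hrec : ∀ v : Word d, v ≠ [] →
      R v = ∑ k ∈ Finset.range v.length, R (v.take k) * q (v.drop k)) :
    res q = R := by
  have key : ∀ (N : ℕ) (v : Word d), v.length ≤ N → res q v = R v := by
    intro N
    induction N with
    | zero =>
      intro v hv
      rw [List.length_eq_zero_iff.mp (Nat.le_zero.mp hv)]
      rw [res_eq_sum hq]
      simp [cpow, unit, h0]
    | succ N ih =>
      intro v hv
      match v with
      | [] =>
        rw [res_eq_sum hq]
        simp [cpow, unit, h0]
      | x :: t =>
        rw [res_fixed hq, hrec (x :: t) (by simp)]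
        rw [show unit d (x :: t) = 0 from rfl, zero_add]
        refine Finset.sum_congr rfl fun k hk => ?_
        congr 1
        refine ih _ ?_
        rw [List.length_take]
        have : (x :: t : Word d).length ≤ N + 1 := hv
        have hk' := Finset.mem_range.mp hk
        omega
  funext v
  exact key v.length v le_rfl

/-- The grouplike element with coefficients given by products of letter weights. -/
noncomputable def Pw (c : Fin d → ℝ) : ETA d := fun v => ((v.map c).prod : ℝ)

lemma Pw_nil (c : Fin d → ℝ) : Pw c ([] : Word d) = 1 := by simp [Pw]

lemma Pw_cons (c : Fin d → ℝ) (x : Fin d) (u : Word d) :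
    Pw c (x :: u) = c x * Pw c u := by simp [Pw]

lemma shuexp_letters' (c : Fin d → ℝ) : shuexp (letters c) = Pw c := shuexp_letters c

lemma concat_lettersL_nil (c : Fin d → ℝ) (p : ETA d) : concat (letters c) p [] = 0 := by
  simp [concat, letters_nil]

lemma concat_lettersL_cons (c : Fin d → ℝ) (p : ETA d) (x : Fin d) (t : Word d) :
    concat (letters c) p (x :: t) = c x * p t := by
  rw [concat, show (x :: t : Word d).length + 1 = t.length + 1 + 1 from rfl,
    Finset.sum_range_succ', Finset.sum_range_succ']
  rw [Finset.sum_eq_zero fun i hi => ?_]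
  · simp [letters_nil, letters_single]
  · rw [letters_eq_zero c ?hh, zero_mul]
    case hh =>
      have : i < t.length := Finset.mem_range.mp hi
      simp only [List.length_take, List.length_cons]
      omega

lemma unit_sub_letters_nil (c : Fin d → ℝ) : (unit d - letters c) ([] : Word d) = 1 := by
  simp [unit, letters_nil]

lemma unit_sub_letters_single (c : Fin d → ℝ) (x : Fin d) :
    (unit d - letters c) [x] = - c x := by
  simp [unit, letters_single]

lemma unit_sub_letters_big (c : Fin d → ℝ) {u : Word d} (h : 2 ≤ u.length) :
    (unit d - letters c) u = 0 := by
  have h1 : u ≠ [] := by intro e; subst e; simp at h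
  rw [Pi.sub_apply, unit, if_neg h1, letters_eq_zero c (by omega), sub_zero]

lemma concat_usubL_nil (c : Fin d → ℝ) (p : ETA d) :
    concat (unit d - letters c) p [] = p [] := by
  simp [concat, unit, letters_nil]

lemma concat_usubL_cons (c : Fin d → ℝ) (p : ETA d) (x : Fin d) (t : Word d) :
    concat (unit d - letters c) p (x :: t) = p (x :: t) - c x * p t := by
  rw [concat, show (x :: t : Word d).length + 1 = t.length + 1 + 1 from rfl,
    Finset.sum_range_succ', Finset.sum_range_succ']
  rw [Finset.sum_eq_zero fun i hi => ?_]
  · simp only [zero_add]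
    rw [show ((x :: t : Word d).take 1) = [x] from rfl,
      show ((x :: t : Word d).take 0) = [] from rfl,
      show ((x :: t : Word d).drop 1) = t from rfl,
      show ((x :: t : Word d).drop 0) = x :: t from rfl,
      unit_sub_letters_nil, unit_sub_letters_single]
    ring
  · rw [unit_sub_letters_big c ?hh, zero_mul]
    case hh =>
      have : i < t.length := Finset.mem_range.mp hi
      simp only [List.length_take, List.length_cons]
      omega

lemma concat_PwL_nil (c : Fin d → ℝ) (r : ETA d) : concat (Pw c) r [] = r [] := by
  simp [concat, Pw_nil]

lemma concat_PwL_single (c : Fin d → ℝ) (r : ETA d) (x : Fin d) :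
    concat (Pw c) r [x] = r [x] + c x * r [] := by
  rw [concat]
  rw [show ([x] : Word d).length + 1 = 2 from rfl]
  rw [Finset.sum_range_succ, Finset.sum_range_one]
  rw [show ([x] : Word d).take 0 = [] from rfl, show ([x] : Word d).drop 0 = [x] from rfl,
    show ([x] : Word d).take 1 = [x] from rfl, show ([x] : Word d).drop 1 = [] from rfl]
  rw [Pw_nil, Pw_cons, Pw_nil]
  ring

lemma concat_PwL_cons (c : Fin d → ℝ) (r : ETA d) (hr : ∀ v : Word d, 2 ≤ v.length → r v = 0)
    (x : Fin d) (u : Word d) (hu : u ≠ []) :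
    concat (Pw c) r (x :: u) = c x * concat (Pw c) r u := by
  rw [concat, show (x :: u : Word d).length + 1 = u.length + 1 + 1 from rfl,
    Finset.sum_range_succ']
  rw [show ((x :: u : Word d).take 0) = [] from rfl, show ((x :: u : Word d).drop 0) = x :: u
    from rfl]
  rw [hr (x :: u) (by cases u with | nil => exact absurd rfl hu | cons y s => simp), mul_zero,
    add_zero]
  rw [concat, Finset.mul_sum]
  refine Finset.sum_congr rfl fun j hj => ?_
  rw [show ((x :: u : Word d).take (j + 1)) = x :: u.take j from rfl,
    show ((x :: u : Word d).drop (j + 1)) = u.drop j from rfl, Pw_cons]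
  ring

lemma key1 (a b : Fin d → ℝ) : ∀ t : Word d,
    Pw (fun i => a i + b i) t
      = Pw b t + ∑ j ∈ Finset.range t.length,
          Pw (fun i => a i + b i) (t.take j) * concat (letters a) (Pw b) (t.drop j) := by
  intro t
  induction t with
  | nil => simp [Pw_nil]
  | cons y s ih =>
    rw [show (y :: s : Word d).length = s.length + 1 from rfl, Finset.sum_range_succ']
    rw [show ((y :: s : Word d).take 0) = [] from rfl,
      show ((y :: s : Word d).drop 0) = y :: s from rfl, Pw_nil,
      concat_lettersL_cons, Pw_cons, Pw_cons]
    have hterm : ∀ j ∈ Finset.range s.length,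
        Pw (fun i => a i + b i) ((y :: s : Word d).take (j + 1))
            * concat (letters a) (Pw b) ((y :: s : Word d).drop (j + 1))
          = (a y + b y) * (Pw (fun i => a i + b i) (s.take j)
              * concat (letters a) (Pw b) (s.drop j)) := by
      intro j _
      rw [show ((y :: s : Word d).take (j + 1)) = y :: s.take j from rfl,
        show ((y :: s : Word d).drop (j + 1)) = s.drop j from rfl, Pw_cons]
      ring
    rw [Finset.sum_congr rfl hterm, ← Finset.mul_sum]
    have hS : ∑ j ∈ Finset.range s.length,
        Pw (fun i => a i + b i) (s.take j) * concat (letters a) (Pw b) (s.drop j)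
          = Pw (fun i => a i + b i) s - Pw b s := by linarith [ih]
    rw [hS]
    ring

lemma part1 (a b : Fin d → ℝ) :
    res (concat (letters a) (Pw b))
      = concat (unit d - letters b) (Pw (fun i => a i + b i)) := by
  have hR_cons : ∀ (x : Fin d) (t : Word d),
      concat (unit d - letters b) (Pw (fun i => a i + b i)) (x :: t)
        = a x * Pw (fun i => a i + b i) t := by
    intro x t
    rw [concat_usubL_cons, Pw_cons]
    ring
  refine res_eq (concat_lettersL_nil a (Pw b)) ?_ ?_
  · rw [concat_usubL_nil, Pw_nil]
  · intro v hv
    match v, hv with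
    | x :: t, _ =>
      rw [hR_cons, show (x :: t : Word d).length = t.length + 1 from rfl,
        Finset.sum_range_succ']
      rw [show ((x :: t : Word d).take 0) = [] from rfl,
        show ((x :: t : Word d).drop 0) = x :: t from rfl,
        concat_usubL_nil, Pw_nil, concat_lettersL_cons]
      have hterm : ∀ j ∈ Finset.range t.length,
          concat (unit d - letters b) (Pw (fun i => a i + b i)) ((x :: t : Word d).take (j + 1))
              * concat (letters a) (Pw b) ((x :: t : Word d).drop (j + 1))
            = a x * (Pw (fun i => a i + b i) (t.take j)
                * concat (letters a) (Pw b) (t.drop j)) := by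
        intro j _
        rw [show ((x :: t : Word d).take (j + 1)) = x :: t.take j from rfl,
          show ((x :: t : Word d).drop (j + 1)) = t.drop j from rfl, hR_cons]
        ring
      rw [Finset.sum_congr rfl hterm, ← Finset.mul_sum]
      have hS : ∑ j ∈ Finset.range t.length,
          Pw (fun i => a i + b i) (t.take j) * concat (letters a) (Pw b) (t.drop j)
            = Pw (fun i => a i + b i) t - Pw b t := by linarith [key1 a b t]
      rw [hS]
      ring

lemma part2 (a b : Fin d → ℝ) :
    res (concat (Pw b) (letters a))
      = concat (Pw (fun i => a i + b i)) (unit d - letters b) := by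
  have hq_big : ∀ v : Word d, 2 ≤ v.length → letters a v = 0 := by
    intro v hv
    exact letters_eq_zero a (by omega)
  have hr_big : ∀ v : Word d, 2 ≤ v.length → (unit d - letters b) v = 0 :=
    fun v hv => unit_sub_letters_big b hv
  have hS_nil : concat (Pw (fun i => a i + b i)) (unit d - letters b) [] = 1 := by
    rw [concat_PwL_nil, unit_sub_letters_nil]
  have hS_single : ∀ x : Fin d,
      concat (Pw (fun i => a i + b i)) (unit d - letters b) [x] = a x := by
    intro x
    rw [concat_PwL_single, unit_sub_letters_single, unit_sub_letters_nil]
    ring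
  have hq_nil : concat (Pw b) (letters a) [] = 0 := by
    rw [concat_PwL_nil, letters_nil]
  have hq_single : ∀ x : Fin d, concat (Pw b) (letters a) [x] = a x := by
    intro x
    rw [concat_PwL_single, letters_single, letters_nil]
    ring
  refine res_eq hq_nil hS_nil ?_
  intro v
  induction v with
  | nil => intro h; exact absurd rfl h
  | cons x u ih =>
    intro _
    match u, ih with
    | [], _ =>
      rw [hS_single, show ([x] : Word d).length = 1 from rfl, Finset.sum_range_one]
      rw [show (([x] : Word d).take 0) = [] from rfl,
        show (([x] : Word d).drop 0) = [x] from rfl, hS_nil, hq_single, one_mul]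
    | y :: s, ih =>
      have hu : (y :: s : Word d) ≠ [] := by simp
      rw [concat_PwL_cons _ _ hr_big x (y :: s) hu]
      rw [show (x :: y :: s : Word d).length = (y :: s : Word d).length + 1 from rfl,
        Finset.sum_range_succ']
      rw [show ((x :: y :: s : Word d).take 0) = [] from rfl,
        show ((x :: y :: s : Word d).drop 0) = x :: y :: s from rfl,
        hS_nil, one_mul, concat_PwL_cons _ _ hq_big x (y :: s) hu]
      rw [show (y :: s : Word d).length = s.length + 1 from rfl, Finset.sum_range_succ']
      simp only [zero_add]
      rw [show ((x :: y :: s : Word d).take 1) = [x] from rfl,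
        show ((x :: y :: s : Word d).drop 1) = y :: s from rfl, hS_single]
      have hterm : ∀ j ∈ Finset.range s.length,
          concat (Pw (fun i => a i + b i)) (unit d - letters b)
              ((x :: y :: s : Word d).take (j + 1 + 1))
              * concat (Pw b) (letters a) ((x :: y :: s : Word d).drop (j + 1 + 1))
            = (a x + b x) * (concat (Pw (fun i => a i + b i)) (unit d - letters b)
                ((y :: s : Word d).take (j + 1))
                * concat (Pw b) (letters a) ((y :: s : Word d).drop (j + 1))) := by
        intro j _
        rw [show ((x :: y :: s : Word d).take (j + 1 + 1))
            = x :: (y :: s : Word d).take (j + 1) from rfl,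
          show ((x :: y :: s : Word d).drop (j + 1 + 1)) = (y :: s : Word d).drop (j + 1) from rfl]
        rw [concat_PwL_cons _ _ hr_big x _ (by simp)]
        ring
      rw [Finset.sum_congr rfl hterm, ← Finset.mul_sum]
      have hIH := ih hu
      rw [show (y :: s : Word d).length = s.length + 1 from rfl, Finset.sum_range_succ'] at hIH
      rw [show ((y :: s : Word d).take 0) = [] from rfl,
        show ((y :: s : Word d).drop 0) = y :: s from rfl, hS_nil, one_mul] at hIH
      have hS : ∑ j ∈ Finset.range s.length,
          concat (Pw (fun i => a i + b i)) (unit d - letters b) ((y :: s : Word d).take (j + 1))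
            * concat (Pw b) (letters a) ((y :: s : Word d).drop (j + 1))
          = concat (Pw (fun i => a i + b i)) (unit d - letters b) (y :: s)
            - concat (Pw b) (letters a) (y :: s) := by linarith [hIH]
      rw [hS]
      ring


end ETA

/-- For linear combinations of single letters `a, b`:
`(∅ - a⊗exp^⧢(b))⁻¹ = (∅ - b) ⊗ exp^⧢(a+b)` and
`(∅ - exp^⧢(b)⊗a)⁻¹ = exp^⧢(a+b) ⊗ (∅ - b)`. -/
theorem res_concat_shuexp (d : ℕ) (a b : Fin d → ℝ) :
    ETA.res (ETA.concat (ETA.letters a) (ETA.shuexp (ETA.letters b)))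
      = ETA.concat (ETA.unit d - ETA.letters b)
          (ETA.shuexp (ETA.letters a + ETA.letters b)) ∧
    ETA.res (ETA.concat (ETA.shuexp (ETA.letters b)) (ETA.letters a))
      = ETA.concat (ETA.shuexp (ETA.letters a + ETA.letters b))
          (ETA.unit d - ETA.letters b) := by
  constructor
  · rw [ETA.letters_add, ETA.shuexp_letters', ETA.shuexp_letters']
    exact ETA.part1 a b
  · rw [ETA.letters_add, ETA.shuexp_letters', ETA.shuexp_letters']
    exact ETA.part2 a b
end

section
/- Let p, q be elements of the extended tensor algebra over ℝ^d with |p^∅| < 1 and |q^∅| < 1, and suppose q is dominated by p, i.e. |q^v| ≤ p^v for every word v. Then (∅-q)^{-1} is dominated by (∅-p)^{-1}: |⟨(∅-q)^{-1}, v⟩| ≤ ⟨(∅-p)^{-1}, v⟩ for every word v. -/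
open scoped BigOperators

namespace ETA

variable {d : ℕ}

lemma cpow_succ_apply (p : ETA d) (n : ℕ) (v : Word d) :
    cpow p (n+1) v = ∑ k ∈ Finset.range (v.length + 1), cpow p n (v.take k) * p (v.drop k) := rfl

lemma cpow_nonneg {p : ETA d} (hp : ∀ v, 0 ≤ p v) (n : ℕ) (v : Word d) :
    0 ≤ cpow p n v := by
  induction n generalizing v with
  | zero => unfold cpow unit; split <;> norm_num
  | succ n ih =>
    rw [cpow_succ_apply]
    exact Finset.sum_nonneg fun k _ => mul_nonneg (ih _) (hp _)

lemma abs_cpow_le {p q : ETA d} (h : ∀ v, |q v| ≤ p v) (n : ℕ) (v : Word d) :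
    |cpow q n v| ≤ cpow p n v := by
  have hp0 : ∀ w, 0 ≤ p w := fun w => (abs_nonneg _).trans (h w)
  induction n generalizing v with
  | zero => unfold cpow unit; split <;> simp
  | succ n ih =>
    rw [cpow_succ_apply]
    calc |∑ k ∈ Finset.range (v.length+1), cpow q n (v.take k) * q (v.drop k)|
        ≤ ∑ k ∈ Finset.range (v.length+1), |cpow q n (v.take k) * q (v.drop k)| :=
          Finset.abs_sum_le_sum_abs _ _
      _ ≤ ∑ k ∈ Finset.range (v.length+1), cpow p n (v.take k) * p (v.drop k) := by
          refine Finset.sum_le_sum fun k _ => ?_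
          rw [abs_mul]
          exact mul_le_mul (ih _) (h _) (abs_nonneg _) (cpow_nonneg hp0 _ _)
      _ = cpow p (n+1) v := (cpow_succ_apply p n v).symm

lemma summable_cpow {p : ETA d} (hp0 : ∀ v, 0 ≤ p v) (hpa : p [] < 1) (v : Word d) :
    Summable (fun n => cpow p n v) := by
  have ha0 : 0 ≤ p [] := hp0 []
  suffices H : ∀ m : ℕ, ∀ v : Word d, v.length < m → Summable (fun n => cpow p n v) from
    H (v.length + 1) v (lt_add_one _)
  intro m
  induction m with
  | zero => intro v hv; omega
  | succ m ih =>
    intro v hv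
    set g : ℕ → ℝ := fun n => ∑ k ∈ Finset.range v.length, cpow p n (v.take k) * p (v.drop k)
      with hg
    have hgsum : Summable g := by
      apply summable_sum
      intro k hk
      have hk' : k < v.length := Finset.mem_range.mp hk
      have hlt : (v.take k).length < m := by
        rw [List.length_take]; omega
      exact (ih _ hlt).mul_right _
    have hgnn : ∀ n, 0 ≤ g n := fun n =>
      Finset.sum_nonneg fun k _ => mul_nonneg (cpow_nonneg hp0 _ _) (hp0 _)
    have hrec : ∀ n, cpow p (n+1) v = g n + cpow p n v * p [] := by
      intro n
      rw [cpow_succ_apply, Finset.sum_range_succ, List.take_length, List.drop_length]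
    set C : ℝ := (cpow p 0 v + ∑' n, g n) / (1 - p []) with hC
    have hGnn : 0 ≤ ∑' n, g n := tsum_nonneg hgnn
    have hf0 : 0 ≤ cpow p 0 v := cpow_nonneg hp0 _ _
    have h1a : 0 < 1 - p [] := by linarith
    have hbound : ∀ N, ∑ n ∈ Finset.range N, cpow p n v ≤ C := by
      intro N
      cases N with
      | zero => simp [hC]; positivity
      | succ M =>
        set S : ℝ := ∑ n ∈ Finset.range (M+1), cpow p n v with hS
        have hsplit : S = cpow p 0 v + (∑ n ∈ Finset.range M, g n
            + (∑ n ∈ Finset.range M, cpow p n v) * p []) := by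
          rw [hS, Finset.sum_range_succ']
          have : ∀ n, cpow p (n+1) v = g n + cpow p n v * p [] := hrec
          rw [Finset.sum_congr rfl (fun n _ => this n), Finset.sum_add_distrib,
            ← Finset.sum_mul]
          ring
        have hGle : ∑ n ∈ Finset.range M, g n ≤ ∑' n, g n :=
          Summable.sum_le_tsum _ (fun n _ => hgnn n) hgsum
        have hTle : ∑ n ∈ Finset.range M, cpow p n v ≤ S := by
          rw [hS]
          exact Finset.sum_le_sum_of_subset_of_nonneg
            (Finset.range_subset_range.mpr (Nat.le_succ M))
            (fun n _ _ => cpow_nonneg hp0 _ _)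
        have hSle : S ≤ cpow p 0 v + ∑' n, g n + S * p [] := by
          nlinarith [mul_le_mul_of_nonneg_right hTle ha0]
        rw [hC, le_div_iff₀ h1a]
        nlinarith
    exact summable_of_sum_range_le (fun n => cpow_nonneg hp0 n v) hbound

end ETA

/-- If `q` is dominated by `p` (and both have scalar part of absolute
value `< 1`), then the resolvent of `q` is dominated by the resolvent of `p`. -/
theorem res_dominated (d : ℕ) (p q : ETA d) (hp : |p []| < 1) (hq : |q []| < 1)
    (hdom : ∀ v : Word d, |q v| ≤ p v) :
    ∀ v : Word d, |ETA.res q v| ≤ ETA.res p v := by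
  intro v
  have hp0 : ∀ w, 0 ≤ p w := fun w => (abs_nonneg _).trans (hdom w)
  have hpa : p [] < 1 := (abs_lt.mp hp).2
  have hP : Summable (fun n => ETA.cpow p n v) := ETA.summable_cpow hp0 hpa v
  have habs : ∀ n, |ETA.cpow q n v| ≤ ETA.cpow p n v := fun n => ETA.abs_cpow_le hdom n v
  have hQabs : Summable (fun n => |ETA.cpow q n v|) :=
    Summable.of_nonneg_of_le (fun n => abs_nonneg _) habs hP
  calc |ETA.res q v| = |∑' n, ETA.cpow q n v| := rfl
    _ ≤ ∑' n, |ETA.cpow q n v| := by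
        simpa only [Real.norm_eq_abs] using
          norm_tsum_le_tsum_norm (f := fun n => ETA.cpow q n v) (by simpa using hQabs)
    _ ≤ ∑' n, ETA.cpow p n v := Summable.tsum_le_tsum habs hQabs hP
    _ = ETA.res p v := rfl
end

section
/- Let p, q be elements of the extended tensor algebra over ℝ^d such that |q^∅| < 1, and let i be a letter. Then the right projection of p⊗(∅-q)^{-1} at i satisfies (p⊗(∅-q)^{-1})|_i = (1/(1-q^∅))·( p|_i + p⊗(∅-q)^{-1}⊗(q|_i) ), where ℓ|_i denotes the element whose coefficient at word v is ℓ^{vi}. -/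
open scoped BigOperators

namespace ETAProof

open ETA

variable {d : ℕ}

lemma summable_abs_of_rec (f g : ℕ → ℝ) (r : ℝ) (hr : |r| < 1)
    (hg : Summable fun n => |g n|)
    (hf : ∀ n, f (n + 1) = r * f n + g n) : Summable fun n => |f n| := by
  have hr0 : (0:ℝ) ≤ |r| := abs_nonneg r
  have hb : ∀ n, |f n| ≤ |r| ^ n * |f 0| + ∑ j ∈ Finset.range n, |r| ^ (n - 1 - j) * |g j| := by
    intro n
    induction n with
    | zero => simp
    | succ n ih =>
      have e1 : |r| * ∑ j ∈ Finset.range n, |r| ^ (n - 1 - j) * |g j|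
          = ∑ j ∈ Finset.range n, |r| ^ (n - j) * |g j| := by
        rw [Finset.mul_sum]
        refine Finset.sum_congr rfl fun j hj => ?_
        have hj' : j < n := Finset.mem_range.mp hj
        have he : n - 1 - j + 1 = n - j := by omega
        rw [← mul_assoc, ← pow_succ', he]
      calc |f (n + 1)| = |r * f n + g n| := by rw [hf n]
        _ ≤ |r| * |f n| + |g n| := by
            refine (abs_add_le _ _).trans ?_
            rw [abs_mul]
        _ ≤ |r| * (|r| ^ n * |f 0| + ∑ j ∈ Finset.range n, |r| ^ (n - 1 - j) * |g j|) + |g n| := by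
            gcongr
        _ = |r| ^ (n + 1) * |f 0| + ∑ j ∈ Finset.range (n + 1), |r| ^ (n + 1 - 1 - j) * |g j| := by
            simp only [Nat.add_sub_cancel]
            rw [mul_add, e1, ← mul_assoc, ← pow_succ',
              Finset.sum_range_succ (fun j => |r| ^ (n - j) * |g j|) n,
              Nat.sub_self, pow_zero, one_mul, add_assoc]
  have hgeo : Summable fun n => |r| ^ n := summable_geometric_of_lt_one hr0 hr
  have hc : Summable fun n => ∑ j ∈ Finset.range (n + 1), |g j| * |r| ^ (n - j) := by
    have h := summable_norm_sum_mul_antidiagonal_of_summable_norm (f := fun n => |g n|)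
      (g := fun n => |r| ^ n) (by simpa using hg) (by simpa [abs_of_nonneg hr0] using hgeo)
    refine h.congr fun n => ?_
    rw [Finset.Nat.sum_antidiagonal_eq_sum_range_succ_mk]
    rw [Real.norm_eq_abs, abs_of_nonneg]
    exact Finset.sum_nonneg fun j _ => mul_nonneg (abs_nonneg _) (pow_nonneg hr0 _)
  have hc' : Summable fun n => ∑ j ∈ Finset.range n, |r| ^ (n - 1 - j) * |g j| := by
    apply (summable_nat_add_iff 1).mp
    refine hc.congr fun n => ?_
    simp only [Nat.add_sub_cancel]
    exact Finset.sum_congr rfl fun j _ => mul_comm _ _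
  exact Summable.of_nonneg_of_le (fun n => abs_nonneg _) hb ((hgeo.mul_right _).add hc')

lemma concat_apply (p q : ETA d) (v : Word d) :
    concat p q v = ∑ k ∈ Finset.range (v.length + 1), p (v.take k) * q (v.drop k) := rfl

lemma concat_unit (p : ETA d) : concat p (ETA.unit d) = p := by
  funext v
  rw [concat_apply, Finset.sum_eq_single_of_mem v.length (Finset.self_mem_range_succ _)]
  · simp [ETA.unit]
  · intro k hk hne
    have hk' : k < v.length := by
      have := Finset.mem_range.mp hk; omega
    have hd : v.drop k ≠ [] := by
      intro h
      have := congrArg List.length h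
      simp at this; omega
    simp [ETA.unit, hd]

lemma concat_add_right (p a b : ETA d) : concat p (a + b) = concat p a + concat p b := by
  funext v
  simp [concat_apply, mul_add, Finset.sum_add_distrib]

lemma proj_add (a b : ETA d) (i : Fin d) : proj (a + b) i = proj a i + proj b i := rfl

lemma triangle (N : ℕ) (f : ℕ → ℕ → ℝ) :
    ∑ k ∈ Finset.range (N + 1), ∑ j ∈ Finset.range (k + 1), f j k
      = ∑ j ∈ Finset.range (N + 1), ∑ k ∈ Finset.Ico j (N + 1), f j k := by
  simp_rw [← Nat.Ico_zero_eq_range]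
  exact (Finset.sum_Ico_Ico_comm 0 (N + 1) f).symm

lemma concat_assoc (a b c : ETA d) : concat (concat a b) c = concat a (concat b c) := by
  funext v
  set N := v.length with hN
  have L : concat (concat a b) c v
      = ∑ k ∈ Finset.range (N + 1), ∑ j ∈ Finset.range (k + 1),
          a (v.take j) * (b ((v.drop j).take (k - j)) * c (v.drop k)) := by
    rw [concat_apply]
    refine Finset.sum_congr rfl fun k hk => ?_
    have hk' : k ≤ N := Nat.lt_succ_iff.mp (Finset.mem_range.mp hk)
    rw [concat_apply, Finset.sum_mul]
    have hlen : (v.take k).length = k := by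
      rw [List.length_take]; omega
    rw [hlen]
    refine Finset.sum_congr rfl fun j hj => ?_
    have hj' : j ≤ k := Nat.lt_succ_iff.mp (Finset.mem_range.mp hj)
    rw [List.take_take, min_eq_left hj', List.drop_take, mul_assoc]
  have R : concat a (concat b c) v
      = ∑ j ∈ Finset.range (N + 1), ∑ m ∈ Finset.range (N - j + 1),
          a (v.take j) * (b ((v.drop j).take m) * c (v.drop (j + m))) := by
    rw [concat_apply]
    refine Finset.sum_congr rfl fun j hj => ?_
    rw [concat_apply, Finset.mul_sum]
    have hlen : (v.drop j).length = N - j := by rw [List.length_drop]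
    rw [hlen]
    refine Finset.sum_congr rfl fun m hm => ?_
    rw [List.drop_drop]
  rw [L, R, triangle]
  refine Finset.sum_congr rfl fun j hj => ?_
  have hj' : j ≤ N := Nat.lt_succ_iff.mp (Finset.mem_range.mp hj)
  rw [Finset.sum_Ico_eq_sum_range]
  have hnj : N + 1 - j = N - j + 1 := by omega
  rw [hnj]
  refine Finset.sum_congr rfl fun m hm => ?_
  rw [Nat.add_sub_cancel_left]

lemma summable_abs_cpow (q : ETA d) (hq : |q []| < 1) :
    ∀ v : Word d, Summable fun n => |cpow q n v| := by
  suffices H : ∀ m, ∀ v : Word d, v.length < m → Summable fun n => |cpow q n v| by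
    intro v; exact H (v.length + 1) v (Nat.lt_succ_self _)
  intro m
  induction m with
  | zero => intro v hv; omega
  | succ m ih =>
    intro v hv
    set g : ℕ → ℝ := fun n =>
      ∑ k ∈ Finset.range v.length, cpow q n (v.take k) * q (v.drop k) with hgdef
    have hrec : ∀ n, cpow q (n + 1) v = q [] * cpow q n v + g n := by
      intro n
      have h0 : cpow q (n + 1) v = concat (cpow q n) q v := rfl
      rw [h0, concat_apply, Finset.sum_range_succ, List.take_length, List.drop_length,
        hgdef, mul_comm, add_comm]
    have hg_inner : ∀ k, k < v.length → Summable fun n => |cpow q n (v.take k)| := by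
      intro k hk
      refine ih _ ?_
      rw [List.length_take]; omega
    have hgs : Summable fun n => |g n| := by
      have h1 : Summable fun n =>
          ∑ k ∈ Finset.range v.length, |cpow q n (v.take k)| * |q (v.drop k)| :=
        summable_sum fun k hk => ((hg_inner k (Finset.mem_range.mp hk)).mul_right _)
      refine Summable.of_nonneg_of_le (fun n => abs_nonneg _) (fun n => ?_) h1
      refine (Finset.abs_sum_le_sum_abs _ _).trans ?_
      exact le_of_eq (Finset.sum_congr rfl fun k _ => abs_mul _ _)
    exact summable_abs_of_rec _ g (q []) hq hgs hrec

lemma summable_cpow (q : ETA d) (hq : |q []| < 1) (v : Word d) :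
    Summable fun n => cpow q n v :=
  summable_abs_iff.mp (summable_abs_cpow q hq v)

lemma res_eq (q : ETA d) (hq : |q []| < 1) :
    res q = ETA.unit d + concat (res q) q := by
  funext v
  have hS := summable_cpow q hq v
  have h0 : res q v = cpow q 0 v + ∑' n, cpow q (n + 1) v := by
    exact Summable.tsum_eq_zero_add hS
  rw [h0]
  have h1 : (∑' n, cpow q (n + 1) v)
      = ∑ k ∈ Finset.range (v.length + 1), ∑' n, cpow q n (v.take k) * q (v.drop k) := by
    rw [← Summable.tsum_finsetSum]
    · rfl
    · intro k hk
      exact (summable_cpow q hq _).mul_right _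
  rw [h1]
  have h2 : ∀ k, (∑' n, cpow q n (v.take k) * q (v.drop k)) = res q (v.take k) * q (v.drop k) :=
    fun k => tsum_mul_right
  show cpow q 0 v + _ = ETA.unit d v + concat (res q) q v
  rw [concat_apply]
  congr 1
  exact Finset.sum_congr rfl fun k _ => h2 k

lemma proj_concat (ℓ q : ETA d) (i : Fin d) :
    proj (concat ℓ q) i = concat ℓ (proj q i) + q [] • proj ℓ i := by
  funext v
  show concat ℓ q (v ++ [i]) = _
  rw [concat_apply]
  have hlen : (v ++ [i]).length = v.length + 1 := by simp
  rw [hlen, Finset.sum_range_succ]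
  have ht : (v ++ [i]).take (v.length + 1) = v ++ [i] :=
    List.take_of_length_le (by simp)
  have hd : (v ++ [i]).drop (v.length + 1) = [] :=
    List.drop_of_length_le (by simp)
  rw [ht, hd]
  have hmain : ∀ k ∈ Finset.range (v.length + 1),
      ℓ ((v ++ [i]).take k) * q ((v ++ [i]).drop k)
        = ℓ (v.take k) * proj q i (v.drop k) := by
    intro k hk
    have hk' : k ≤ v.length := Nat.lt_succ_iff.mp (Finset.mem_range.mp hk)
    rw [List.take_append_of_le_length hk', List.drop_append_of_le_length hk']
    rfl
  rw [Finset.sum_congr rfl hmain]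
  show _ = concat ℓ (proj q i) v + q [] • proj ℓ i v
  rw [concat_apply]
  simp only [smul_eq_mul]
  rw [mul_comm]
  rfl

end ETAProof

/-- Projection formula for `p ⊗ (∅-q)⁻¹`:
`(p⊗(∅-q)⁻¹)|_i = (1/(1-q^∅)) • ( p|_i + p⊗(∅-q)⁻¹⊗(q|_i) )`. -/
theorem proj_concat_res (d : ℕ) (p q : ETA d) (hq : |q []| < 1) (i : Fin d) :
    ETA.proj (ETA.concat p (ETA.res q)) i
      = (1 - q [])⁻¹ •
          (ETA.proj p i + ETA.concat (ETA.concat p (ETA.res q)) (ETA.proj q i)) := by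
  open ETAProof in
  have h1 : ETA.concat p (ETA.res q)
      = p + ETA.concat (ETA.concat p (ETA.res q)) q := by
    conv_lhs => rw [res_eq q hq]
    rw [concat_add_right, concat_unit, concat_assoc]
  have h2 : ETA.proj (ETA.concat p (ETA.res q)) i
      = ETA.proj p i + (ETA.concat (ETA.concat p (ETA.res q)) (ETA.proj q i)
          + q [] • ETA.proj (ETA.concat p (ETA.res q)) i) := by
    conv_lhs => rw [h1]
    rw [proj_add, proj_concat]
  have hc : (1 : ℝ) - q [] ≠ 0 := by
    have := abs_lt.mp hq
    intro h; linarith [this.2]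
  have h3 : (1 - q []) • ETA.proj (ETA.concat p (ETA.res q)) i
      = ETA.proj p i + ETA.concat (ETA.concat p (ETA.res q)) (ETA.proj q i) := by
    rw [sub_smul, one_smul]
    nth_rewrite 1 [h2]
    abel
  calc ETA.proj (ETA.concat p (ETA.res q)) i
      = (1 - q [])⁻¹ • ((1 - q []) • ETA.proj (ETA.concat p (ETA.res q)) i) := by
        rw [smul_smul, inv_mul_cancel₀ hc, one_smul]
    _ = _ := by rw [h3]
end

section
/- Let W be a one-dimensional standard Brownian motion, Ŵ_t = (t, W_t), and let 𝕎̂ denote its Stratonovich signature over the two-letter alphabet {1,2}. For a word v of length n containing x occurrences of the letter 1, the second moment of the corresponding signature coefficient satisfies E[⟨v, 𝕎̂_t⟩²] ≤ C(2n, n) · t^{n+x}/(n+x)! · 2^{x-n}, where C(2n,n) is the central binomial coefficient. -/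
open scoped BigOperators

open MeasureTheory

/-- `W` is a standard one-dimensional Brownian motion on `(Ω, μ)`: measurable marginals,
a.s. continuous paths started at `0`, Gaussian increments `W_t - W_s ~ N(0, t-s)`, and
independent increments. -/
def IsBrownianMotion {Ω : Type*} [MeasurableSpace Ω] (μ : Measure Ω)
    (W : ℝ → Ω → ℝ) : Prop :=
  (∀ t : ℝ, Measurable (W t)) ∧
  (∀ᵐ ω ∂μ, W 0 ω = 0 ∧ Continuous fun t => W t ω) ∧
  (∀ s t : ℝ, 0 ≤ s → s ≤ t →
    μ.map (fun ω => W t ω - W s ω)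
      = ProbabilityTheory.gaussianReal 0 (Real.toNNReal (t - s))) ∧
  (∀ (n : ℕ) (u : ℕ → ℝ), Monotone u → (∀ i, 0 ≤ u i) →
    ProbabilityTheory.iIndepFun
      (fun i : Fin n => fun ω => W (u (i + 1)) ω - W (u i) ω) μ)

/-- The element `e_1 + ½ e_2 ⊗ e_2` of Fawcett's formula (letter `0` is the time letter,
letter `1` the Brownian letter). -/
noncomputable def fawcettBase : ETA 2 := fun v =>
  if v = [(0 : Fin 2)] then 1 else if v = [(1 : Fin 2), 1] then (1 : ℝ) / 2 else 0

/-- The coefficients of `E[𝕎̂_t] = Σ_m (t^m/m!) (e_1 + ½ e_2⊗e_2)^{⊗m}` (Fawcett's formula). -/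
noncomputable def fawcett (t : ℝ) : ETA 2 := fun v =>
  ∑' m : ℕ, t ^ m / (Nat.factorial m : ℝ) * ETA.cpow fawcettBase m v


section AuxiliaryLemmas

theorem shuffleW_len_count : ∀ (u w z : Word 2), z ∈ ETA.shuffleW u w →
    z.length = u.length + w.length ∧ ∀ a : Fin 2, z.count a = u.count a + w.count a
  | [], w, z => by
    intro hz
    rw [ETA.shuffleW] at hz
    obtain rfl : z = w := by simpa using hz
    simp
  | a :: u, [], z => by
    intro hz
    rw [ETA.shuffleW] at hz
    · obtain rfl : z = a :: u := by simpa using hz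
      simp
    · simp
  | a :: u, b :: w, z => by
    intro hz
    rw [ETA.shuffleW] at hz
    rw [Multiset.mem_add] at hz
    rcases hz with hz | hz <;> rw [Multiset.mem_map] at hz
    · obtain ⟨z', hz', rfl⟩ := hz
      obtain ⟨h1, h2⟩ := shuffleW_len_count u (b :: w) z' hz'
      refine ⟨by simp [h1]; omega, fun c => ?_⟩
      simp [List.count_cons, h2 c]
      omega
    · obtain ⟨z', hz', rfl⟩ := hz
      obtain ⟨h1, h2⟩ := shuffleW_len_count (a :: u) w z' hz'
      refine ⟨by simp [h1]; omega, fun c => ?_⟩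
      simp [List.count_cons, h2 c]
      omega
  termination_by u w z => u.length + w.length

theorem shuffleW_card {A : Type*} : ∀ (u w : List A),
    Multiset.card (ETA.shuffleW u w) = (u.length + w.length).choose u.length
  | [], w => by rw [ETA.shuffleW]; simp
  | a :: u, [] => by
    rw [ETA.shuffleW]
    · simp
    · simp
  | a :: u, b :: w => by
    rw [ETA.shuffleW]
    simp only [Multiset.card_add, Multiset.card_map, List.length_cons]
    rw [shuffleW_card u (b :: w), shuffleW_card (a :: u) w]
    simp only [List.length_cons]
    have e1 : u.length + (w.length + 1) = u.length + w.length + 1 := by omega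
    have e2 : u.length + 1 + w.length = u.length + w.length + 1 := by omega
    have e3 : u.length + 1 + (w.length + 1) = (u.length + w.length + 1) + 1 := by omega
    rw [e1, e2, e3, Nat.choose_succ_succ (u.length + w.length + 1) u.length]
  termination_by u w => u.length + w.length
/-- block value of a word, read in reverse -/
noncomputable def bval : List (Fin 2) → ℝ
  | [] => 1
  | [a] => if a = 0 then 1 else 0
  | a :: b :: r => if a = 0 then bval (b :: r) else if b = 1 then bval r / 2 else 0

lemma bval_nil : bval [] = 1 := rfl
lemma bval_single (a : Fin 2) : bval [a] = if a = 0 then 1 else 0 := rfl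
lemma bval_cons_cons (a b : Fin 2) (r : List (Fin 2)) :
    bval (a :: b :: r) = if a = 0 then bval (b :: r) else if b = 1 then bval r / 2 else 0 := rfl

lemma bval_cons_zero (r : List (Fin 2)) : bval ((0 : Fin 2) :: r) = bval r := by
  cases r with
  | nil => simp [bval]
  | cons b r => simp [bval_cons_cons]

lemma fawcettBase_ne (l : Word 2) (h1 : l ≠ [(0 : Fin 2)]) (h2 : l ≠ [(1 : Fin 2), 1]) :
    fawcettBase l = 0 := by
  simp [fawcettBase, h1, h2]

lemma fawcettBase_nil : fawcettBase [] = 0 := by simp [fawcettBase]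
lemma fawcettBase_one : fawcettBase [(1 : Fin 2)] = 0 := by
  refine fawcettBase_ne _ (by decide) (by decide)
lemma fawcettBase_zero : fawcettBase [(0 : Fin 2)] = 1 := by simp [fawcettBase]
lemma fawcettBase_oneone : fawcettBase [(1 : Fin 2), 1] = (1:ℝ)/2 := by
  simp [fawcettBase]


lemma concat_base_nil (p : ETA 2) : ETA.concat p fawcettBase [] = 0 := by
  simp [ETA.concat, fawcettBase_nil]

lemma concat_base_one (p : ETA 2) : ETA.concat p fawcettBase [(1 : Fin 2)] = 0 := by
  simp [ETA.concat, Finset.sum_range_succ, fawcettBase_nil, fawcettBase_one]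

lemma drop_len_ne (y : Word 2) (k : ℕ) (s l : Word 2)
    (hlen : y.length - k + s.length ≠ l.length) : y.drop k ++ s ≠ l := by
  intro hEq
  have := congrArg List.length hEq
  rw [List.length_append, List.length_drop] at this
  exact hlen this

lemma concat_base_append_zero (p : ETA 2) (y : Word 2) :
    ETA.concat p fawcettBase (y ++ [(0 : Fin 2)]) = p y := by
  unfold ETA.concat
  rw [Finset.sum_eq_single_of_mem y.length]
  · rw [show (y ++ [(0:Fin 2)]).take y.length = y from List.take_left,
        show (y ++ [(0:Fin 2)]).drop y.length = [(0:Fin 2)] from List.drop_left,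
        fawcettBase_zero, mul_one]
  · simp only [Finset.mem_range, List.length_append, List.length_cons, List.length_nil]
    omega
  · intro k hk hne
    rw [Finset.mem_range, List.length_append, List.length_singleton] at hk
    rcases Nat.lt_or_ge k y.length with h | h
    · rw [List.drop_append_of_le_length h.le, fawcettBase_ne, mul_zero]
      · exact drop_len_ne y k [(0:Fin 2)] [(0:Fin 2)] (by simp only [List.length_cons, List.length_nil]; omega)
      · intro hEq
        have hl := congrArg List.length hEq
        rw [List.length_append, List.length_drop] at hl
        simp only [List.length_cons, List.length_nil] at hl
        obtain ⟨c, hc⟩ := List.length_eq_one_iff.mp (show (y.drop k).length = 1 by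
          rw [List.length_drop]; omega)
        rw [hc] at hEq
        simp only [List.singleton_append] at hEq
        injection hEq with h1 h2
        injection h2 with h3 h4
        exact absurd h3 (by decide)
    · have hk2 : k = y.length + 1 := by omega
      subst hk2
      have : (y ++ [(0:Fin 2)]).drop (y.length + 1) = [] := by
        rw [List.drop_append] <;> simp
      rw [this, fawcettBase_nil, mul_zero]

lemma concat_base_append_oneone (p : ETA 2) (y : Word 2) :
    ETA.concat p fawcettBase (y ++ [(1 : Fin 2), 1]) = p y * (1/2) := by
  unfold ETA.concat
  rw [Finset.sum_eq_single_of_mem y.length]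
  · rw [show (y ++ [(1:Fin 2), 1]).take y.length = y from List.take_left,
        show (y ++ [(1:Fin 2), 1]).drop y.length = [(1:Fin 2), 1] from List.drop_left,
        fawcettBase_oneone]
  · simp only [Finset.mem_range, List.length_append, List.length_cons, List.length_nil]
    omega
  · intro k hk hne
    have hk' : k < y.length + 3 := by
      have := Finset.mem_range.mp hk
      rw [List.length_append] at this
      simp at this; omega
    rcases Nat.lt_or_ge k y.length with h | h
    · rw [List.drop_append_of_le_length h.le, fawcettBase_ne, mul_zero]
      · exact drop_len_ne y k [(1:Fin 2), 1] [(0:Fin 2)]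
          (by simp only [List.length_cons, List.length_nil]; omega)
      · exact drop_len_ne y k [(1:Fin 2), 1] [(1:Fin 2), 1]
          (by simp only [List.length_cons, List.length_nil]; omega)
    · rcases Nat.lt_or_ge k (y.length + 1) with h1 | h1
      · exact absurd (by omega : k = y.length) hne
      · rcases Nat.lt_or_ge k (y.length + 2) with h2 | h2
        · have hk2 : k = y.length + 1 := by omega
          subst hk2
          have : (y ++ [(1:Fin 2), 1]).drop (y.length + 1) = [(1 : Fin 2)] := by
            rw [List.drop_append] <;> simp
          rw [this, fawcettBase_one, mul_zero]
        · have hk3 : k = y.length + 2 := by omega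
          subst hk3
          have : (y ++ [(1:Fin 2), 1]).drop (y.length + 2) = [] := by
            rw [List.drop_append] <;> simp
          rw [this, fawcettBase_nil, mul_zero]

lemma concat_base_append_zeroone (p : ETA 2) (y : Word 2) :
    ETA.concat p fawcettBase (y ++ [(0 : Fin 2), 1]) = 0 := by
  unfold ETA.concat
  apply Finset.sum_eq_zero
  intro k hk
  have hk' : k < y.length + 3 := by
    have := Finset.mem_range.mp hk
    rw [List.length_append] at this
    simp at this; omega
  rcases Nat.lt_or_ge k y.length with h | h
  · rw [List.drop_append_of_le_length h.le, fawcettBase_ne, mul_zero]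
    · exact drop_len_ne y k [(0:Fin 2), 1] [(0:Fin 2)]
        (by simp only [List.length_cons, List.length_nil]; omega)
    · intro hEq
      have hl := congrArg List.length hEq
      rw [List.length_append, List.length_drop] at hl
      simp only [List.length_cons, List.length_nil] at hl
      have hnil : y.drop k = [] := by
        rw [← List.length_eq_zero_iff, List.length_drop]; omega
      rw [hnil] at hEq
      exact absurd hEq (by decide)
  · rcases Nat.lt_or_ge k (y.length + 1) with h1 | h1
    · have hk1 : k = y.length := by omega
      subst hk1
      rw [show (y ++ [(0:Fin 2), 1]).drop y.length = [(0:Fin 2), 1] from List.drop_left,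
          fawcettBase_ne _ (by decide) (by decide), mul_zero]
    · rcases Nat.lt_or_ge k (y.length + 2) with h2 | h2
      · have hk2 : k = y.length + 1 := by omega
        subst hk2
        have : (y ++ [(0:Fin 2), 1]).drop (y.length + 1) = [(1 : Fin 2)] := by
          rw [List.drop_append] <;> simp
        rw [this, fawcettBase_one, mul_zero]
      · have hk3 : k = y.length + 2 := by omega
        subst hk3
        have : (y ++ [(0:Fin 2), 1]).drop (y.length + 2) = [] := by
          rw [List.drop_append] <;> simp
        rw [this, fawcettBase_nil, mul_zero]

lemma cpow_fawcett : ∀ (m : ℕ) (r : Word 2),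
    ETA.cpow fawcettBase m r.reverse = if 2 * m = r.length + r.count 0 then bval r else 0
  | 0, r => by
    cases r with
    | nil => simp [ETA.cpow, ETA.unit, bval_nil]
    | cons a r' =>
      show ETA.unit 2 _ = _
      rw [ETA.unit]
      have h1 : (a :: r').reverse ≠ [] := by simp
      rw [if_neg h1, if_neg (by simp [List.length_cons]; omega)]
  | m + 1, r => by
    show ETA.concat (ETA.cpow fawcettBase m) fawcettBase r.reverse = _
    cases r with
    | nil =>
      rw [show (([] : Word 2)).reverse = [] from rfl, concat_base_nil,
        if_neg (by simp)]
    | cons a r' =>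
      rcases (by omega : a = 0 ∨ a = 1) with rfl | rfl
      · rw [List.reverse_cons, concat_base_append_zero, cpow_fawcett m r']
        have hcond : (2 * (m + 1) = ((0 : Fin 2) :: r').length + ((0 : Fin 2) :: r').count 0)
            ↔ (2 * m = r'.length + r'.count 0) := by
          simp [List.count_cons, List.length_cons]
          omega
        rw [if_congr hcond (bval_cons_zero r') rfl]
      · cases r' with
        | nil =>
          rw [show [(1 : Fin 2)].reverse = [(1 : Fin 2)] from rfl, concat_base_one]
          have : bval [(1 : Fin 2)] = 0 := by rw [bval_single, if_neg (by decide)]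
          rw [this]
          split <;> rfl
        | cons b r'' =>
          rcases (by omega : b = 0 ∨ b = 1) with rfl | rfl
          · have hrev : ((1 : Fin 2) :: (0 : Fin 2) :: r'').reverse
                = r''.reverse ++ [(0 : Fin 2), 1] := by
              simp
            rw [hrev, concat_base_append_zeroone]
            have : bval ((1 : Fin 2) :: (0 : Fin 2) :: r'') = 0 := by
              rw [bval_cons_cons, if_neg (by decide), if_neg (by decide)]
            rw [this]
            split <;> rfl
          · have hrev : ((1 : Fin 2) :: (1 : Fin 2) :: r'').reverse
                = r''.reverse ++ [(1 : Fin 2), 1] := by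
              simp
            rw [hrev, concat_base_append_oneone, cpow_fawcett m r'']
            have hb : bval ((1 : Fin 2) :: (1 : Fin 2) :: r'') = bval r'' / 2 := by
              rw [bval_cons_cons, if_neg (by decide), if_pos rfl]
            rw [hb]
            by_cases h : 2 * m = r''.length + r''.count 0
            · rw [if_pos h, if_pos (by simp [List.count_cons, List.length_cons]; omega)]
              ring
            · rw [if_neg h, if_neg (by simp [List.count_cons, List.length_cons]; omega)]
              ring

lemma bval_bounds : ∀ r : Word 2,
    0 ≤ bval r ∧ bval r ≤ ((1 : ℝ)/2) ^ ((r.length - r.count 0) / 2)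
  | [] => by simp [bval_nil]
  | [a] => by
    rw [bval_single]
    split
    · constructor
      · norm_num
      · subst ‹a = 0›
        simp
    · exact ⟨le_refl 0, by positivity⟩
  | a :: b :: r => by
    have IH2 := bval_bounds r
    have IH1 := bval_bounds (b :: r)
    rw [bval_cons_cons]
    have hcl : r.count 0 ≤ r.length := List.count_le_length
    have hcl1 : (b :: r).count 0 ≤ (b :: r).length := List.count_le_length
    rcases (by omega : a = 0 ∨ a = 1) with rfl | rfl
    · rw [if_pos rfl]
      refine ⟨IH1.1, IH1.2.trans_eq ?_⟩
      congr 1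
      simp [List.count_cons, List.length_cons]
    · rw [if_neg (by decide)]
      rcases (by omega : b = 0 ∨ b = 1) with rfl | rfl
      · rw [if_neg (by decide)]
        exact ⟨le_refl 0, by positivity⟩
      · rw [if_pos rfl]
        constructor
        · have := IH2.1; positivity
        · have hexp : (((1 : Fin 2) :: (1 : Fin 2) :: r).length
              - ((1 : Fin 2) :: (1 : Fin 2) :: r).count 0) / 2
              = (r.length - r.count 0) / 2 + 1 := by
            simp [List.count_cons, List.length_cons]
            omega
          rw [hexp, pow_succ]
          have h2 := IH2.2
          calc bval r / 2 ≤ ((1:ℝ)/2) ^ ((r.length - r.count 0)/2) / 2 := by linarith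
            _ = ((1:ℝ)/2) ^ ((r.length - r.count 0)/2) * (1/2) := by ring

lemma cpow_fawcett' (m : ℕ) (z : Word 2) :
    ETA.cpow fawcettBase m z
      = if 2 * m = z.length + z.count 0 then bval z.reverse else 0 := by
  have h := cpow_fawcett m z.reverse
  rw [List.reverse_reverse, List.length_reverse, List.count_reverse] at h
  exact h

lemma fawcett_le (t : ℝ) (ht : 0 ≤ t) (z : Word 2) (n x : ℕ)
    (hlen : z.length = n + n) (hcnt : z.count 0 = x + x) :
    fawcett t z ≤ t ^ (n + x) / ((n + x).factorial : ℝ) * ((1:ℝ)/2) ^ (n - x) := by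
  have hxn : x ≤ n := by
    have := (List.count_le_length : z.count (0 : Fin 2) ≤ z.length)
    omega
  unfold fawcett
  rw [tsum_eq_single (n + x) ?_]
  · rw [cpow_fawcett', if_pos (by omega)]
    apply mul_le_mul_of_nonneg_left _ (by positivity)
    have h := (bval_bounds z.reverse).2
    rw [List.length_reverse, List.count_reverse, hlen, hcnt] at h
    have he : (n + n - (x + x)) / 2 = n - x := by omega
    rwa [he] at h
  · intro m hm
    rw [cpow_fawcett', if_neg (by omega), mul_zero]

lemma multiset_integral {Ω : Type*} [MeasurableSpace Ω] (μ : Measure Ω)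
    (g : Word 2 → Ω → ℝ) (hg : ∀ z, Integrable (g z) μ) :
    ∀ M : Multiset (Word 2),
      Integrable (fun ω => (M.map (fun z => g z ω)).sum) μ ∧
      ∫ ω, (M.map (fun z => g z ω)).sum ∂μ = (M.map (fun z => ∫ ω, g z ω ∂μ)).sum := by
  intro M
  induction M using Multiset.induction_on with
  | empty => simp [integrable_const]
  | cons a M ih =>
    simp only [Multiset.map_cons, Multiset.sum_cons]
    exact ⟨(hg a).add ih.1, by rw [integral_add (hg a) ih.1, ih.2]⟩

end AuxiliaryLemmas

/-- Let `W` be a Brownian motion and `S` the Stratonovich signature of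
`Ŵ_t = (t, W_t)` (characterized by: level zero is `1`, integration of the time letter is
the pathwise integral, the shuffle identity holds, and Fawcett's formula gives the
expectation). Then for a word `v` of length `n` with `x` occurrences of the time letter,
`E[⟨v, 𝕎̂_t⟩²] ≤ C(2n,n) · t^{n+x}/(n+x)! · 2^{x-n}`. -/
theorem second_moment_bound {Ω : Type*} [MeasurableSpace Ω] (μ : Measure Ω)
    [MeasureTheory.IsProbabilityMeasure μ]
    (W : ℝ → Ω → ℝ) (hW : IsBrownianMotion μ W)
    (S : Word 2 → ℝ → Ω → ℝ)
    (hmeas : ∀ v t, Measurable (S v t))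
    (hint : ∀ v t, MeasureTheory.Integrable (fun ω => (S v t ω) ^ 2) μ)
    (hempty : ∀ t ω, S [] t ω = 1)
    (htime : ∀ v t ω, S (v ++ [(0 : Fin 2)]) t ω = ∫ s in (0:ℝ)..t, S v s ω)
    (hshuffle : ∀ (u w : Word 2) (t : ℝ), ∀ᵐ ω ∂μ,
      S u t ω * S w t ω = ((ETA.shuffleW u w).map fun z => S z t ω).sum)
    (hFawcett : ∀ (v : Word 2) (t : ℝ), 0 ≤ t → (∫ ω, S v t ω ∂μ) = fawcett t v)
    (v : Word 2) (t : ℝ) (ht : 0 ≤ t) :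
    ∫ ω, (S v t ω) ^ 2 ∂μ ≤
      (Nat.choose (2 * v.length) v.length : ℝ) *
        (t ^ (v.length + v.count 0) / (Nat.factorial (v.length + v.count 0) : ℝ)) *
        (2 : ℝ) ^ ((v.count 0 : ℤ) - (v.length : ℤ)) := by
  classical
  have hInt : ∀ z : Word 2, Integrable (S z t) μ := fun z =>
    ((memLp_two_iff_integrable_sq (hmeas z t).aestronglyMeasurable).2 (hint z t)).integrable
      (by norm_num)
  have hae : (fun ω => (S v t ω) ^ 2)
      =ᵐ[μ] fun ω => ((ETA.shuffleW v v).map (fun z => S z t ω)).sum := by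
    filter_upwards [hshuffle v v t] with ω h
    rw [sq]; exact h
  have h1 : ∫ ω, (S v t ω) ^ 2 ∂μ
      = ((ETA.shuffleW v v).map (fun z => fawcett t z)).sum := by
    rw [integral_congr_ae hae,
      (multiset_integral μ (fun z ω => S z t ω) hInt (ETA.shuffleW v v)).2]
    exact congrArg Multiset.sum (Multiset.map_congr rfl (fun z _ => hFawcett z t ht))
  rw [h1]
  set n := v.length with hn
  set x := v.count 0 with hx
  have hxn : x ≤ n := List.count_le_length
  have hbound : ∀ b ∈ (ETA.shuffleW v v).map (fun z => fawcett t z),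
      b ≤ t ^ (n + x) / ((n + x).factorial : ℝ) * ((1:ℝ)/2) ^ (n - x) := by
    intro b hb
    obtain ⟨z, hz, rfl⟩ := Multiset.mem_map.mp hb
    obtain ⟨hl, hc⟩ := shuffleW_len_count v v z hz
    exact fawcett_le t ht z n x hl (hc 0)
  have hsum := Multiset.sum_le_card_nsmul _ _ hbound
  rw [Multiset.card_map, shuffleW_card] at hsum
  refine hsum.trans_eq ?_
  rw [nsmul_eq_mul]
  have h2 : ((1:ℝ)/2) ^ (n - x) = (2:ℝ) ^ ((x : ℤ) - (n : ℤ)) := by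
    rw [show ((x:ℤ) - (n:ℤ)) = -(((n - x : ℕ)) : ℤ) by
      rw [Nat.cast_sub hxn]; ring]
    rw [zpow_neg, zpow_natCast, one_div, inv_pow]
  rw [h2, two_mul]
  push_cast
  ring
end
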